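/- The proximal operator of σ·φ_QO* at w₀, where φ_QO*(w) = (‖ẑ‖/(2λ))‖w‖² on {⟨w, ẑ⟩ = 0} and +∞ elsewhere, equals (λ/(λ + σ‖ẑ‖))·(w₀ - P_ẑ(w₀)). -/
import Mathlib


open scoped RealInnerProductSpace

/-- The prox of `σ · φ_QO*` at `w₀`, where `φ_QO*(w) = (‖zh‖/(2λ))‖w‖²` on `{⟪w, zh⟫ = 0}`
and `+∞` elsewhere, is `(λ/(λ + σ‖zh‖)) • (w₀ - P_zh w₀)` : the stated point satisfies the
constraint, minimizes the objective over the constraint set, and is the unique minimizer. -/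
theorem stmt_18 (b : ℕ) (zh : EuclideanSpace ℝ (Fin b)) (hzh : zh ≠ 0)
    (lam σ : ℝ) (hlam : 0 < lam) (hσ : 0 < σ)
    (w₀ c : EuclideanSpace ℝ (Fin b))
    (hc : c = (lam / (lam + σ * ‖zh‖)) • (w₀ - (⟪w₀, ‖zh‖⁻¹ • zh⟫) • (‖zh‖⁻¹ • zh))) :
    ⟪c, zh⟫ = 0 ∧
      (∀ w : EuclideanSpace ℝ (Fin b), ⟪w, zh⟫ = 0 →
        1 / (2 * σ) * ‖c - w₀‖ ^ 2 + ‖zh‖ / (2 * lam) * ‖c‖ ^ 2 ≤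
          1 / (2 * σ) * ‖w - w₀‖ ^ 2 + ‖zh‖ / (2 * lam) * ‖w‖ ^ 2) ∧
      (∀ w : EuclideanSpace ℝ (Fin b), ⟪w, zh⟫ = 0 →
        1 / (2 * σ) * ‖w - w₀‖ ^ 2 + ‖zh‖ / (2 * lam) * ‖w‖ ^ 2 =
          1 / (2 * σ) * ‖c - w₀‖ ^ 2 + ‖zh‖ / (2 * lam) * ‖c‖ ^ 2 → w = c) := by
  have hz : (0:ℝ) < ‖zh‖ := norm_pos_iff.mpr hzh
  have hden : (0:ℝ) < lam + σ * ‖zh‖ := by positivity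
  set a : ℝ := 1 / (2 * σ) with ha
  set β : ℝ := ‖zh‖ / (2 * lam) with hβ
  have hapos : 0 < a := by positivity
  have hβpos : 0 < β := by positivity
  set t : ℝ := lam / (lam + σ * ‖zh‖) with ht
  -- constraint
  have hczh : ⟪c, zh⟫ = 0 := by
    rw [hc]
    rw [real_inner_smul_left, inner_sub_left, real_inner_smul_left,
      real_inner_smul_left, real_inner_smul_right, real_inner_self_eq_norm_sq]
    field_simp
    ring
  -- gradient is a multiple of zh
  have hgrad : a • (c - w₀) + β • c = (-(a * ‖zh‖⁻¹ * ‖zh‖⁻¹ * ⟪w₀, zh⟫)) • zh := by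
    have h1 : (2:ℝ) * σ ≠ 0 := by positivity
    have h2 : (2:ℝ) * lam ≠ 0 := by positivity
    have h3 : lam + σ * ‖zh‖ ≠ 0 := ne_of_gt hden
    have h4 : ‖zh‖ ≠ 0 := ne_of_gt hz
    rw [hc, real_inner_smul_right, ha, hβ, ht]
    match_scalars <;> field_simp <;> ring
  -- key expansion
  have hkey : ∀ w : EuclideanSpace ℝ (Fin b), ⟪w, zh⟫ = 0 →
      a * ‖w - w₀‖ ^ 2 + β * ‖w‖ ^ 2 - (a * ‖c - w₀‖ ^ 2 + β * ‖c‖ ^ 2)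
        = (a + β) * ‖w - c‖ ^ 2 := by
    intro w hw
    have h1 : ‖w - w₀‖ ^ 2 = ‖w - c‖ ^ 2 + 2 * ⟪w - c, c - w₀⟫ + ‖c - w₀‖ ^ 2 := by
      have := norm_add_sq_real (w - c) (c - w₀)
      simpa using this
    have h2 : ‖w‖ ^ 2 = ‖w - c‖ ^ 2 + 2 * ⟪w - c, c⟫ + ‖c‖ ^ 2 := by
      have := norm_add_sq_real (w - c) c
      simpa using this
    have h3 : a * ⟪w - c, c - w₀⟫ + β * ⟪w - c, c⟫ = 0 := by
      have h0 : ⟪w - c, a • (c - w₀) + β • c⟫ = 0 := by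
        rw [hgrad, real_inner_smul_right, inner_sub_left, hw, hczh]
        ring
      rw [inner_add_right, real_inner_smul_right, real_inner_smul_right] at h0
      linarith
    rw [h1, h2]
    linear_combination 2 * h3
  refine ⟨hczh, ?_, ?_⟩
  · intro w hw
    have h := hkey w hw
    have h4 : 0 ≤ (a + β) * ‖w - c‖ ^ 2 := by positivity
    linarith
  · intro w hw heq
    have h := hkey w hw
    have h0 : (a + β) * ‖w - c‖ ^ 2 = 0 := by linarith
    have hab : a + β ≠ 0 := by positivity
    have hsq : ‖w - c‖ ^ 2 = 0 := by
      rcases mul_eq_zero.mp h0 with h | h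
      · exact absurd h hab
      · exact h
    have hn : ‖w - c‖ = 0 := by
      have := pow_eq_zero_iff (n := 2) (by norm_num) |>.mp hsq
      exact this
    exact sub_eq_zero.mp (norm_eq_zero.mp hn)
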